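/- Let X be a non-negative random variable and E ≥ max(E[X], 5). Define λ(x) = 3 ln x and λ*(E) the smallest k with λ^{(k)}(E) ≤ 5. Then either there exists 1 ≤ k ≤ λ*(E) with Pr(X < E - λ^{(k)}(E)) ≥ 1/((λ^{(k-1)}(E)+2)² + 1), or Pr(X < E + 10) ≥ 1/2. -/

import Mathlib

open MeasureTheory ProbabilityTheory Real

noncomputable def lam (x : ℝ) : ℝ := 3 * Real.log x

noncomputable def lstar (x : ℝ) : ℕ := sInf {k : ℕ | lam^[k] x ≤ 5}

noncomputable def sig (x : ℝ) : ℝ :=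
  if x < 5 then 0.61 else if x < 5.25 then 0.49 else if x < 5.7 then 0.38
  else if x < 6.6 then 0.27 else if x < 9 then 0.17 else if x < 20 then 0.0916
  else 1 / x

lemma sig_nonneg (x : ℝ) : 0 ≤ sig x := by
  unfold sig
  split_ifs with h1 h2 h3 h4 h5 h6 <;> try norm_num
  have hx : (20:ℝ) ≤ x := not_lt.1 h6
  positivity

lemma sig_le (x : ℝ) : sig x ≤ 0.61 := by
  unfold sig
  split_ifs with h1 h2 h3 h4 h5 h6 <;> try norm_num
  have hx : (20:ℝ) ≤ x := not_lt.1 h6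
  have h1 : x⁻¹ ≤ (20:ℝ)⁻¹ := by gcongr
  norm_num at h1 ⊢
  linarith

lemma log_le_of_le_expsum {c q : ℝ} (hc : 0 < c) (hq : 0 ≤ q) (n : ℕ)
    (h : c ≤ ∑ i ∈ Finset.range n, q ^ i / i.factorial) : Real.log c ≤ q :=
  (Real.log_le_iff_le_exp hc).2 (h.trans (Real.sum_le_exp_of_nonneg hq n))

lemma log525 : Real.log 5.25 ≤ 5 / 3 := by
  apply log_le_of_le_expsum (by norm_num) (by norm_num) 8
  simp [Finset.sum_range_succ, Nat.factorial]
  norm_num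

lemma log57 : Real.log 5.7 ≤ 1.75 := by
  apply log_le_of_le_expsum (by norm_num) (by norm_num) 8
  simp [Finset.sum_range_succ, Nat.factorial]
  norm_num

lemma log66 : Real.log 6.6 ≤ 1.9 := by
  apply log_le_of_le_expsum (by norm_num) (by norm_num) 9
  simp [Finset.sum_range_succ, Nat.factorial]
  norm_num

lemma log9 : Real.log 9 ≤ 2.2 := by
  apply log_le_of_le_expsum (by norm_num) (by norm_num) 9
  simp [Finset.sum_range_succ, Nat.factorial]
  norm_num

lemma log20 : Real.log 20 ≤ 3 := by
  apply log_le_of_le_expsum (by norm_num) (by norm_num) 10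
  simp [Finset.sum_range_succ, Nat.factorial]
  norm_num

lemma log5 : Real.log 5 ≤ 1.62 := by
  apply log_le_of_le_expsum (by norm_num) (by norm_num) 9
  simp [Finset.sum_range_succ, Nat.factorial]
  norm_num

lemma exp203 : (400:ℝ) ≤ Real.exp (20/3) := by
  have h := Real.sum_le_exp_of_nonneg (x := 20/3) (by norm_num) 9
  refine le_trans ?_ h
  simp [Finset.sum_range_succ, Nat.factorial]
  norm_num

lemma log_lin {x c : ℝ} (hc : 0 < c) (hx : 0 < x) : Real.log x ≤ Real.log c + x / c - 1 := by
  have h := Real.log_le_sub_one_of_pos (show 0 < x / c by positivity)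
  rw [Real.log_div hx.ne' hc.ne'] at h
  linarith

lemma lam_dec {x : ℝ} (hx : 5 ≤ x) : 3 * Real.log x ≤ x - 0.01 := by
  have h := log_lin (show (0:ℝ) < 5 by norm_num) (show 0 < x by linarith)
  have h5 := log5
  linarith

lemma log_le_two_sqrt {x : ℝ} (hx : 1 ≤ x) : Real.log x ≤ 2 * Real.sqrt x := by
  have h0 : (0:ℝ) ≤ x := by linarith
  have h1 : Real.log (Real.sqrt x) ≤ Real.sqrt x - 1 :=
    Real.log_le_sub_one_of_pos (Real.sqrt_pos.2 (by linarith))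
  have h2 : Real.log (Real.sqrt x) = Real.log x / 2 := Real.log_sqrt h0
  nlinarith [Real.sqrt_nonneg x]

lemma sig_eq_61 {y : ℝ} (h : y < 5) : sig y = 0.61 := by unfold sig; rw [if_pos h]

lemma sig_ge_49 {y : ℝ} (h : y < 5.25) : 0.49 ≤ sig y := by
  unfold sig; split_ifs <;> first | norm_num | linarith

lemma sig_ge_38 {y : ℝ} (h : y < 5.7) : 0.38 ≤ sig y := by
  unfold sig; split_ifs <;> first | norm_num | linarith

lemma sig_ge_27 {y : ℝ} (h : y < 6.6) : 0.27 ≤ sig y := by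
  unfold sig; split_ifs <;> first | norm_num | linarith

lemma sig_ge_17 {y : ℝ} (h : y < 9) : 0.17 ≤ sig y := by
  unfold sig; split_ifs <;> first | norm_num | linarith

lemma sig_ge_0916 {y : ℝ} (h : y < 20) : 0.0916 ≤ sig y := by
  unfold sig; split_ifs <;> first | norm_num | linarith

lemma sig_eq_inv {y : ℝ} (h : 20 ≤ y) : sig y = 1 / y := by
  unfold sig; split_ifs <;> linarith

set_option maxHeartbeats 1000000 in
lemma sig_step {x : ℝ} (hx : 5 ≤ x) :
    sig x + (x + sig x) / (x + 2) ^ 2 ≤ sig (3 * Real.log x) := by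
  have hpos : (0:ℝ) < (x + 2) ^ 2 := by positivity
  have hx0 : (0:ℝ) < x := by linarith
  by_cases h1 : x < 5.25
  · have hl : 3 * Real.log x < 5 := by
      have := Real.log_lt_log hx0 h1
      nlinarith [log525]
    have hs : sig x = 0.49 := by
      unfold sig; rw [if_neg (by linarith), if_pos h1]
    rw [sig_eq_61 hl, hs, ← sub_nonneg]
    have h2 : (x + 0.49) / (x + 2) ^ 2 ≤ 0.12 := by
      rw [div_le_iff₀ hpos]; nlinarith
    linarith
  by_cases h2 : x < 5.7
  · have hl : 3 * Real.log x < 5.25 := by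
      have := Real.log_lt_log hx0 h2
      nlinarith [log57]
    have hs : sig x = 0.38 := by
      unfold sig; rw [if_neg (by linarith), if_neg h1, if_pos h2]
    have hge := sig_ge_49 hl
    rw [hs]
    have h3 : (x + 0.38) / (x + 2) ^ 2 ≤ 0.11 := by
      rw [div_le_iff₀ hpos]; nlinarith [sq_nonneg (x - 5.25)]
    linarith
  by_cases h3 : x < 6.6
  · have hl : 3 * Real.log x < 5.7 := by
      have := Real.log_lt_log hx0 h3
      nlinarith [log66]
    have hs : sig x = 0.27 := by
      unfold sig; rw [if_neg (by linarith), if_neg h1, if_neg h2, if_pos h3]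
    have hge := sig_ge_38 hl
    rw [hs]
    have h4 : (x + 0.27) / (x + 2) ^ 2 ≤ 0.11 := by
      rw [div_le_iff₀ hpos]; nlinarith [sq_nonneg (x - 5.7)]
    linarith
  by_cases h4 : x < 9
  · have hl : 3 * Real.log x < 6.6 := by
      have := Real.log_lt_log hx0 h4
      nlinarith [log9]
    have hs : sig x = 0.17 := by
      unfold sig; rw [if_neg (by linarith), if_neg h1, if_neg h2, if_neg h3, if_pos h4]
    have hge := sig_ge_27 hl
    rw [hs]
    have h5 : (x + 0.17) / (x + 2) ^ 2 ≤ 0.1 := by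
      rw [div_le_iff₀ hpos]; nlinarith [sq_nonneg (x - 6.6)]
    linarith
  by_cases h5 : x < 20
  · have hl : 3 * Real.log x < 9 := by
      have := Real.log_lt_log hx0 h5
      nlinarith [log20]
    have hs : sig x = 0.0916 := by
      unfold sig
      rw [if_neg (by linarith), if_neg h1, if_neg h2, if_neg h3, if_neg h4, if_pos h5]
    have hge := sig_ge_17 hl
    rw [hs]
    have h6 : (x + 0.0916) / (x + 2) ^ 2 ≤ 0.076 := by
      rw [div_le_iff₀ hpos]; nlinarith [sq_nonneg (x - 9)]
    linarith
  -- now x ≥ 20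
  push_neg at h5
  have hs : sig x = 1 / x := sig_eq_inv h5
  have hinvx : 1 / x ≤ 0.05 := by rw [div_le_iff₀ hx0]; linarith
  have hinvx0 : 0 < 1 / x := by positivity
  by_cases hL : 3 * Real.log x < 20
  · have hge := sig_ge_0916 hL
    rw [hs]
    have hb : (x + 1 / x) / (x + 2) ^ 2 ≤ (x + 0.05) / (x + 2) ^ 2 := by gcongr
    have hb2 : (x + 0.05) / (x + 2) ^ 2 ≤ 0.0415 := by
      rw [div_le_iff₀ hpos]; nlinarith [sq_nonneg (x - 20)]
    linarith
  · push_neg at hL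
    have hx400 : (400:ℝ) ≤ x := by
      have h20 : (20:ℝ)/3 ≤ Real.log x := by linarith
      have := (Real.le_log_iff_exp_le hx0).1 h20
      linarith [exp203]
    set r := Real.sqrt x with hr
    have hr2 : r ^ 2 = x := Real.sq_sqrt (by linarith)
    have hr20 : (20:ℝ) ≤ r := by
      have : Real.sqrt 400 ≤ r := Real.sqrt_le_sqrt (by linarith)
      rwa [show (400:ℝ) = 20 ^ 2 by norm_num, Real.sqrt_sq (by norm_num)] at this
    have hLr : Real.log x ≤ 2 * r := log_le_two_sqrt (by linarith)
    have hL0 : 0 < Real.log x := by linarith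
    have hsl : sig (3 * Real.log x) = 1 / (3 * Real.log x) := sig_eq_inv hL
    rw [hs, hsl]
    have k1 : 1 / (6 * r) ≤ 1 / (3 * Real.log x) := by
      apply one_div_le_one_div_of_le (by linarith)
      linarith
    have hxx : (1 / x) * x = 1 := by field_simp
    have k2 : (x + 1 / x) / (x + 2) ^ 2 ≤ 2 / x := by
      rw [div_le_div_iff₀ hpos hx0]
      nlinarith [hxx, hx400]
    have k4 : 1 / x + 2 / x ≤ 1 / (6 * r) := by
      rw [← add_div, div_le_div_iff₀ hx0 (by linarith)]
      nlinarith [hr2, hr20]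
    linarith [k2, k4, k1]

lemma lam_descent : ∀ n : ℕ, ∀ x : ℝ, x ≤ 5 + n / 100 → ∃ k, lam^[k] x ≤ 5 := by
  intro n
  induction n with
  | zero => intro x hx; exact ⟨0, by simpa using hx⟩
  | succ n ih =>
    intro x hx
    by_cases h : x ≤ 5
    · exact ⟨0, by simpa using h⟩
    · push_neg at h
      have h2 : lam x ≤ 5 + n / 100 := by
        have := lam_dec (le_of_lt h)
        unfold lam
        push_cast at hx ⊢
        linarith
      obtain ⟨k, hk⟩ := ih (lam x) h2
      exact ⟨k + 1, by rwa [Function.iterate_succ_apply]⟩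

lemma lstar_mem {x : ℝ} : lam^[lstar x] x ≤ 5 := by
  have h : ∃ k, lam^[k] x ≤ 5 := by
    rcases le_or_gt x 5 with h | h
    · exact ⟨0, by simpa using h⟩
    · have := lam_descent (Nat.ceil ((x - 5) * 100)) x (by
        have := Nat.le_ceil ((x - 5) * 100)
        push_cast
        linarith)
      exact this
  exact Nat.sInf_mem h

set_option maxHeartbeats 1000000 in
theorem core_thresholds {Ω : Type*} [MeasurableSpace Ω]
    (μ : Measure Ω) [IsProbabilityMeasure μ]
    (X : Ω → ℝ) (hXm : Measurable X) (hXint : Integrable X μ)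
    (hX0 : ∀ ω, 0 ≤ X ω)
    (E : ℝ) (hE5 : 5 ≤ E) (hEX : (∫ ω, X ω ∂μ) ≤ E) :
    (∃ k : ℕ, 1 ≤ k ∧ k ≤ lstar E ∧
        (μ {ω | X ω < E - lam^[k] E}).toReal
          ≥ 1 / ((lam^[k - 1] E + 2) ^ 2 + 1)) ∨
    (μ {ω | X ω < E + 10}).toReal ≥ 1 / 2 := by
  by_cases hcase : (∃ k : ℕ, 1 ≤ k ∧ k ≤ lstar E ∧
      (μ {ω | X ω < E - lam^[k] E}).toReal ≥ 1 / ((lam^[k - 1] E + 2) ^ 2 + 1))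
  · exact Or.inl hcase
  right
  push_neg at hcase
  have hmeas : ∀ t : ℝ, MeasurableSet {ω | t ≤ X ω} :=
    fun t => measurableSet_le measurable_const hXm
  have hint : ∀ (t : ℝ) (s : Set Ω), IntegrableOn (fun ω => X ω - t) s μ :=
    fun t s => (hXint.sub (integrable_const t)).integrableOn
  have hcompl : ∀ t : ℝ, {ω | X ω < t} = {ω | t ≤ X ω}ᶜ := by
    intro t; ext ω; simp [not_le]
  have hmreal : ∀ t : ℝ, (μ {ω | X ω < t}).toReal = 1 - (μ {ω | t ≤ X ω}).toReal := by
    intro t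
    rw [hcompl t, prob_compl_eq_one_sub (hmeas t),
      ENNReal.toReal_sub_of_le prob_le_one ENNReal.one_ne_top, ENNReal.toReal_one]
  have hm1 : ∀ s : Set Ω, (μ s).toReal ≤ 1 := fun s => by
    simpa using ENNReal.toReal_mono ENNReal.one_ne_top (prob_le_one (μ := μ) (s := s))
  have hgt5 : ∀ k, k < lstar E → 5 < lam^[k] E := by
    intro k hk
    by_contra h
    push_neg at h
    have : lstar E ≤ k := Nat.sInf_le h
    omega
  have key : ∀ k, k ≤ lstar E →
      ∫ ω in {ω | E - lam^[k] E ≤ X ω}, (X ω - (E - lam^[k] E)) ∂μ ≤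
        (lam^[k] E + sig (lam^[k] E)) * (μ {ω | E - lam^[k] E ≤ X ω}).toReal := by
    intro k
    induction k with
    | zero =>
      intro _
      simp only [Function.iterate_zero, id_eq, sub_self, sub_zero]
      have huniv : {ω | (0:ℝ) ≤ X ω} = Set.univ := Set.eq_univ_of_forall hX0
      rw [huniv]
      simp only [Measure.restrict_univ, measure_univ, ENNReal.toReal_one, mul_one]
      have := sig_nonneg E
      linarith
    | succ k ih =>
      intro hk1
      have hkK : k < lstar E := Nat.lt_of_lt_of_le (Nat.lt_succ_self k) hk1
      set A := lam^[k] E with hA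
      set B := lam^[k + 1] E with hB
      have ihk := ih (Nat.le_of_lt hkK)
      have hA5 : 5 < A := hgt5 k hkK
      have hBA : B = 3 * Real.log A := by rw [hB, Function.iterate_succ_apply']; rfl
      have hB_le : B ≤ A - 0.01 := by rw [hBA]; exact lam_dec (le_of_lt hA5)
      have hTsub : {ω | E - B ≤ X ω} ⊆ {ω | E - A ≤ X ω} := by
        intro ω hω; simp only [Set.mem_setOf_eq] at *; linarith
      set m' := (μ {ω | E - B ≤ X ω}).toReal with hm'
      set p := (μ {ω | X ω < E - B}).toReal with hp
      set m := (μ {ω | E - A ≤ X ω}).toReal with hmm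
      have hpε : p ≤ 1 / ((A + 2) ^ 2 + 1) := by
        have h := hcase (k + 1) (by omega) hk1
        simp only [Nat.add_sub_cancel] at h
        rw [← hA, ← hB, ← hp] at h
        exact le_of_lt h
      have hppos : 0 ≤ p := ENNReal.toReal_nonneg
      have hm'0 : (0:ℝ) ≤ m' := ENNReal.toReal_nonneg
      have hm'eq : m' = 1 - p := by
        have h0 := hmreal (E - B)
        rw [← hp, ← hm'] at h0
        linarith
      have hmm' : m ≤ m' + p := by
        have hsub : {ω | E - A ≤ X ω} ⊆ {ω | E - B ≤ X ω} ∪ {ω | X ω < E - B} := by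
          intro ω _
          rcases le_or_gt (E - B) (X ω) with h | h
          · exact Or.inl h
          · exact Or.inr h
        have h1 : μ {ω | E - A ≤ X ω} ≤ μ {ω | E - B ≤ X ω} + μ {ω | X ω < E - B} :=
          le_trans (measure_mono hsub) (measure_union_le _ _)
        have h2 := ENNReal.toReal_mono
          (ENNReal.add_ne_top.2 ⟨measure_ne_top μ _, measure_ne_top μ _⟩) h1
        rw [ENNReal.toReal_add (measure_ne_top μ _) (measure_ne_top μ _)] at h2
        rw [hmm, hm', hp]
        exact h2
      have hI1 : ∫ ω in {ω | E - B ≤ X ω}, (X ω - (E - B)) ∂μ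
          = (∫ ω in {ω | E - B ≤ X ω}, (X ω - (E - A)) ∂μ) - (A - B) * m' := by
        have hfe : (fun ω => X ω - (E - B)) = fun ω => (X ω - (E - A)) - (A - B) := by
          funext ω; ring
        rw [hfe, integral_sub (hint (E - A) _) (integrable_const _), setIntegral_const,
          smul_eq_mul, measureReal_def, ← hm']
        ring
      have hI2 : ∫ ω in {ω | E - B ≤ X ω}, (X ω - (E - A)) ∂μ ≤
          ∫ ω in {ω | E - A ≤ X ω}, (X ω - (E - A)) ∂μ := by
        refine setIntegral_mono_set (hint (E - A) _) ?_ (HasSubset.Subset.eventuallyLE hTsub)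
        refine (ae_restrict_iff' (hmeas (E - A))).2 (ae_of_all _ ?_)
        intro ω hω
        simp only [Set.mem_setOf_eq, Pi.zero_apply] at hω ⊢
        linarith
      have hsigstep : sig A + (A + sig A) / (A + 2) ^ 2 ≤ sig B := by
        rw [hBA]; exact sig_step (le_of_lt hA5)
      have hsA := sig_nonneg A
      have hQ : (0:ℝ) < (A + 2) ^ 2 := by positivity
      have hpQ : p * ((A + 2) ^ 2 + 1) ≤ 1 := (le_div_iff₀ (by positivity)).1 hpε
      have f1 : (A + sig A) * m ≤ (A + sig A) * (m' + p) :=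
        mul_le_mul_of_nonneg_left hmm' (by linarith)
      have f2 : (A + sig A) / (A + 2) ^ 2 * m' ≤ (sig B - sig A) * m' :=
        mul_le_mul_of_nonneg_right (by linarith) hm'0
      have f3 : (A + sig A) * p ≤ (A + sig A) / (A + 2) ^ 2 * m' := by
        rw [hm'eq, div_mul_eq_mul_div, le_div_iff₀ hQ]
        nlinarith [hpQ, hsA, hA5, hppos]
      have h4 : ∫ ω in {ω | E - B ≤ X ω}, (X ω - (E - A)) ∂μ ≤ (A + sig A) * m :=
        le_trans hI2 ihk
      rw [hI1]
      nlinarith [f1, f2, f3, h4]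
  have hKle : lam^[lstar E] E ≤ 5 := lstar_mem
  have hK0 : 0 ≤ lam^[lstar E] E := by
    cases hKk : lstar E with
    | zero => simpa using (by linarith : (0:ℝ) ≤ E)
    | succ n =>
      have h5 : 5 < lam^[n] E := hgt5 n (by omega)
      rw [Function.iterate_succ_apply',
        show lam (lam^[n] E) = 3 * Real.log (lam^[n] E) from rfl]
      have : 0 ≤ Real.log (lam^[n] E) := Real.log_nonneg (by linarith)
      linarith
  have hkey := key (lstar E) le_rfl
  set aK := lam^[lstar E] E with haK
  set q := (μ {ω | E + 10 ≤ X ω}).toReal with hq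
  have hq0 : 0 ≤ q := ENNReal.toReal_nonneg
  have hsubK : {ω | E + 10 ≤ X ω} ⊆ {ω | E - aK ≤ X ω} := by
    intro ω hω; simp only [Set.mem_setOf_eq] at *; linarith
  have hmark : (aK + 10) * q ≤ ∫ ω in {ω | E - aK ≤ X ω}, (X ω - (E - aK)) ∂μ := by
    have c1 : (aK + 10) * q = ∫ _ω in {ω | E + 10 ≤ X ω}, (aK + 10) ∂μ := by
      rw [setIntegral_const, smul_eq_mul, measureReal_def, ← hq]; ring
    rw [c1]
    have c2 : ∫ _ω in {ω | E + 10 ≤ X ω}, (aK + 10) ∂μ ≤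
        ∫ ω in {ω | E + 10 ≤ X ω}, (X ω - (E - aK)) ∂μ := by
      refine setIntegral_mono_on (integrable_const _) (hint _ _) (hmeas (E + 10)) ?_
      intro ω hω; simp only [Set.mem_setOf_eq] at hω; linarith
    refine c2.trans (setIntegral_mono_set (hint _ _) ?_ (HasSubset.Subset.eventuallyLE hsubK))
    refine (ae_restrict_iff' (hmeas _)).2 (ae_of_all _ ?_)
    intro ω hω
    simp only [Set.mem_setOf_eq, Pi.zero_apply] at hω ⊢
    linarith
  have hfin : (aK + 10) * q ≤ aK + 0.61 := by
    have h2 : (aK + sig aK) * (μ {ω | E - aK ≤ X ω}).toReal ≤ aK + 0.61 := by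
      have hmle := hm1 {ω | E - aK ≤ X ω}
      have hm0 : (0:ℝ) ≤ (μ {ω | E - aK ≤ X ω}).toReal := ENNReal.toReal_nonneg
      nlinarith [sig_nonneg aK, sig_le aK]
    linarith [hmark, le_trans hkey h2]
  rw [hmreal (E + 10), ← hq]
  nlinarith [hfin, hKle, hK0, hq0]
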